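/- For P, Q ∈ Γ_n with 0 < r ≤ p_i/q_i ≤ R for all i, the relative J-divergence D(P||Q) = ∑(p_i - q_i)ln((p_i+q_i)/(2q_i)) satisfies (r²(r+3)/(r+1)³)·J(P||Q) ≤ D(P||Q) ≤ (R²(R+3)/(R+1)³)·J(P||Q), where J(P||Q) = ∑(p_i - q_i)ln(p_i/q_i). -/

import Mathlib

open Finset Real

noncomputable def Af (t : ℝ) : ℝ := (t-1) * (Real.log (t+1) - Real.log 2)
noncomputable def Bf (t : ℝ) : ℝ := (t-1) * Real.log t
noncomputable def Af' (t : ℝ) : ℝ := (Real.log (t+1) - Real.log 2) + (1 - 2/(t+1))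
noncomputable def Bf' (t : ℝ) : ℝ := Real.log t + (1 - 1/t)

lemma hasDerivAf {t : ℝ} (ht : 0 < t) : HasDerivAt Af (Af' t) t := by
  have h0 : t + 1 ≠ 0 := by linarith
  have h1 : HasDerivAt (fun x : ℝ => Real.log (x+1) - Real.log 2) ((t+1)⁻¹ * 1) t :=
    ((Real.hasDerivAt_log h0).comp t ((hasDerivAt_id t).add_const 1)).sub_const _
  have h2 := ((hasDerivAt_id t).sub_const 1).mul h1
  refine h2.congr_deriv ?_
  unfold Af'
  simp only [id_eq]
  field_simp
  ring

lemma hasDerivBf {t : ℝ} (ht : 0 < t) : HasDerivAt Bf (Bf' t) t := by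
  have h1 := ((hasDerivAt_id t).sub_const 1).mul (Real.hasDerivAt_log (ne_of_gt ht))
  refine h1.congr_deriv ?_
  unfold Bf'
  simp only [id_eq]
  field_simp

lemma hasDerivAf' {t : ℝ} (ht : 0 < t) : HasDerivAt Af' ((t+3)/(t+1)^2) t := by
  have h0 : t + 1 ≠ 0 := by linarith
  have h1 : HasDerivAt (fun x : ℝ => Real.log (x+1) - Real.log 2) ((t+1)⁻¹ * 1) t :=
    ((Real.hasDerivAt_log h0).comp t ((hasDerivAt_id t).add_const 1)).sub_const _
  have h3 : HasDerivAt (fun x : ℝ => x + 1) 1 t := (hasDerivAt_id t).add_const 1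
  have h2 : HasDerivAt (fun x : ℝ => 1 - 2/(x+1)) (-((0*(t+1) - 2*1)/(t+1)^2)) t :=
    ((hasDerivAt_const t 2).div h3 h0).const_sub 1
  have h4 := h1.add h2
  refine h4.congr_deriv ?_
  field_simp
  ring

lemma hasDerivBf' {t : ℝ} (ht : 0 < t) : HasDerivAt Bf' ((t+1)/t^2) t := by
  have h0 : t ≠ 0 := ne_of_gt ht
  have h2 : HasDerivAt (fun x : ℝ => 1 - 1/x) (-((0*t - 1*1)/t^2)) t :=
    ((hasDerivAt_const t 1).div (hasDerivAt_id t) h0).const_sub 1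
  have h4 := (Real.hasDerivAt_log h0).add h2
  refine h4.congr_deriv ?_
  field_simp
  ring

lemma phi_mono {a b : ℝ} (ha : 0 < a) (hab : a ≤ b) :
    a^2*(a+3)/(a+1)^3 ≤ b^2*(b+3)/(b+1)^3 := by
  have hb : 0 < b := lt_of_lt_of_le ha hab
  rw [div_le_div_iff₀ (by positivity) (by positivity)]
  nlinarith [sq_nonneg (a*b-1), sq_nonneg (a-b), mul_pos ha hb, sq_nonneg (a+b),
    mul_nonneg (sub_nonneg.2 hab) (mul_pos ha hb).le, sq_nonneg (a*b)]

lemma Af1 : Af 1 = 0 := by unfold Af; ring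
lemma Bf1 : Bf 1 = 0 := by unfold Bf; ring
lemma Af'1 : Af' 1 = 0 := by unfold Af'; norm_num
lemma Bf'1 : Bf' 1 = 0 := by unfold Bf'; norm_num

lemma key_lower {r t : ℝ} (hr : 0 < r) (hr1 : r ≤ 1) (hrt : r ≤ t) :
    r^2*(r+3)/(r+1)^3 * Bf t ≤ Af t := by
  set m := r^2*(r+3)/(r+1)^3 with hm
  have ht : 0 < t := lt_of_lt_of_le hr hrt
  set F : ℝ → ℝ := fun x => Af x - m * Bf x with hF
  set F' : ℝ → ℝ := fun x => Af' x - m * Bf' x with hF'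
  have hd : ∀ x : ℝ, 0 < x → HasDerivAt F (F' x) x := fun x hx =>
    (hasDerivAf hx).sub ((hasDerivBf hx).const_mul m)
  have hd' : ∀ x : ℝ, 0 < x → HasDerivAt F' ((x+3)/(x+1)^2 - m*((x+1)/x^2)) x := fun x hx =>
    (hasDerivAf' hx).sub ((hasDerivBf' hx).const_mul m)
  have hd'nonneg : ∀ x : ℝ, r ≤ x → 0 ≤ (x+3)/(x+1)^2 - m*((x+1)/x^2) := by
    intro x hx
    have hx0 : 0 < x := lt_of_lt_of_le hr hx
    have h1 : m ≤ x^2*(x+3)/(x+1)^3 := phi_mono hr hx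
    have h2 : (x+3)/(x+1)^2 = (x^2*(x+3)/(x+1)^3) * ((x+1)/x^2) := by
      field_simp
    have h3 : (0:ℝ) ≤ (x+1)/x^2 := by positivity
    rw [sub_nonneg, h2]
    exact mul_le_mul_of_nonneg_right h1 h3
  have hmono : MonotoneOn F' (Set.Ici r) := by
    apply monotoneOn_of_deriv_nonneg (convex_Ici r)
    · exact fun x hx => (hd' x (lt_of_lt_of_le hr hx)).continuousAt.continuousWithinAt
    · intro x hx
      rw [interior_Ici] at hx
      exact (hd' x (hr.trans hx)).differentiableAt.differentiableWithinAt
    · intro x hx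
      rw [interior_Ici] at hx
      rw [(hd' x (hr.trans hx)).deriv]
      exact hd'nonneg x (le_of_lt hx)
  have hF'1 : F' 1 = 0 := by rw [hF']; simp [Af'1, Bf'1]
  have hF1 : F 1 = 0 := by rw [hF]; simp [Af1, Bf1]
  have key : 0 ≤ F t := by
    rcases le_total t 1 with h | h
    · have hanti : AntitoneOn F (Set.Icc r 1) := by
        apply antitoneOn_of_deriv_nonpos (convex_Icc r 1)
        · exact fun x hx => (hd x (lt_of_lt_of_le hr hx.1)).continuousAt.continuousWithinAt
        · intro x hx
          rw [interior_Icc] at hx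
          exact (hd x (hr.trans hx.1)).differentiableAt.differentiableWithinAt
        · intro x hx
          rw [interior_Icc] at hx
          rw [(hd x (hr.trans hx.1)).deriv]
          have := hmono (Set.mem_Ici.2 hx.1.le) (Set.mem_Ici.2 hr1) hx.2.le
          linarith [hF'1 ▸ this]
      have := hanti (Set.mem_Icc.2 ⟨hrt, h⟩) (Set.mem_Icc.2 ⟨hr1, le_rfl⟩) h
      linarith
    · have hmonoF : MonotoneOn F (Set.Ici 1) := by
        apply monotoneOn_of_deriv_nonneg (convex_Ici 1)
        · exact fun x hx => (hd x (lt_of_lt_of_le one_pos hx)).continuousAt.continuousWithinAt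
        · intro x hx
          rw [interior_Ici] at hx
          exact (hd x (one_pos.trans hx)).differentiableAt.differentiableWithinAt
        · intro x hx
          rw [interior_Ici] at hx
          rw [(hd x (one_pos.trans hx)).deriv]
          have := hmono (Set.mem_Ici.2 hr1) (Set.mem_Ici.2 (hr1.trans hx.le)) hx.le
          linarith [hF'1 ▸ this]
      have := hmonoF (Set.mem_Ici.2 le_rfl) (Set.mem_Ici.2 h) h
      linarith
  simp only [hF] at key
  linarith

lemma key_upper {R t : ℝ} (hR1 : 1 ≤ R) (ht : 0 < t) (htR : t ≤ R) :
    Af t ≤ R^2*(R+3)/(R+1)^3 * Bf t := by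
  set M := R^2*(R+3)/(R+1)^3 with hM
  have hR0 : 0 < R := lt_of_lt_of_le one_pos hR1
  set G : ℝ → ℝ := fun x => M * Bf x - Af x with hG
  set G' : ℝ → ℝ := fun x => M * Bf' x - Af' x with hG'
  have hd : ∀ x : ℝ, 0 < x → HasDerivAt G (G' x) x := fun x hx =>
    ((hasDerivBf hx).const_mul M).sub (hasDerivAf hx)
  have hd' : ∀ x : ℝ, 0 < x → HasDerivAt G' (M*((x+1)/x^2) - (x+3)/(x+1)^2) x := fun x hx =>
    ((hasDerivBf' hx).const_mul M).sub (hasDerivAf' hx)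
  have hd'nonneg : ∀ x : ℝ, 0 < x → x ≤ R → 0 ≤ M*((x+1)/x^2) - (x+3)/(x+1)^2 := by
    intro x hx0 hx
    have h1 : x^2*(x+3)/(x+1)^3 ≤ M := phi_mono hx0 hx
    have h2 : (x+3)/(x+1)^2 = (x^2*(x+3)/(x+1)^3) * ((x+1)/x^2) := by
      field_simp
    have h3 : (0:ℝ) ≤ (x+1)/x^2 := by positivity
    rw [sub_nonneg, h2]
    exact mul_le_mul_of_nonneg_right h1 h3
  have hmono : MonotoneOn G' (Set.Ioc 0 R) := by
    apply monotoneOn_of_deriv_nonneg (convex_Ioc 0 R)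
    · exact fun x hx => (hd' x hx.1).continuousAt.continuousWithinAt
    · intro x hx
      rw [interior_Ioc] at hx
      exact (hd' x hx.1).differentiableAt.differentiableWithinAt
    · intro x hx
      rw [interior_Ioc] at hx
      rw [(hd' x hx.1).deriv]
      exact hd'nonneg x hx.1 hx.2.le
  have hG'1 : G' 1 = 0 := by rw [hG']; simp [Af'1, Bf'1]
  have hG1 : G 1 = 0 := by rw [hG]; simp [Af1, Bf1]
  have key : 0 ≤ G t := by
    rcases le_total t 1 with h | h
    · have hanti : AntitoneOn G (Set.Ioc 0 1) := by
        apply antitoneOn_of_deriv_nonpos (convex_Ioc 0 1)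
        · exact fun x hx => (hd x hx.1).continuousAt.continuousWithinAt
        · intro x hx
          rw [interior_Ioc] at hx
          exact (hd x hx.1).differentiableAt.differentiableWithinAt
        · intro x hx
          rw [interior_Ioc] at hx
          rw [(hd x hx.1).deriv]
          have := hmono (Set.mem_Ioc.2 ⟨hx.1, hx.2.le.trans hR1⟩) (Set.mem_Ioc.2 ⟨one_pos, hR1⟩) hx.2.le
          linarith [hG'1 ▸ this]
      have := hanti (Set.mem_Ioc.2 ⟨ht, h⟩) (Set.mem_Ioc.2 ⟨one_pos, le_rfl⟩) h
      linarith
    · have hmonoG : MonotoneOn G (Set.Icc 1 R) := by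
        apply monotoneOn_of_deriv_nonneg (convex_Icc 1 R)
        · exact fun x hx => (hd x (lt_of_lt_of_le one_pos hx.1)).continuousAt.continuousWithinAt
        · intro x hx
          rw [interior_Icc] at hx
          exact (hd x (one_pos.trans hx.1)).differentiableAt.differentiableWithinAt
        · intro x hx
          rw [interior_Icc] at hx
          rw [(hd x (one_pos.trans hx.1)).deriv]
          have := hmono (Set.mem_Ioc.2 ⟨one_pos, hR1⟩) (Set.mem_Ioc.2 ⟨one_pos.trans hx.1, hx.2.le⟩) hx.1.le
          linarith [hG'1 ▸ this]
      have := hmonoG (Set.mem_Icc.2 ⟨le_rfl, hR1⟩) (Set.mem_Icc.2 ⟨h, htR⟩) h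
      linarith
  simp only [hG] at key
  linarith

theorem stmt8 (n : ℕ) (p q : Fin n → ℝ)
    (hp : ∀ i, 0 < p i) (hq : ∀ i, 0 < q i)
    (hp1 : ∑ i, p i = 1) (hq1 : ∑ i, q i = 1)
    (r R : ℝ) (hr : 0 < r) (hrR : ∀ i, r ≤ p i / q i ∧ p i / q i ≤ R) :
    (r^2*(r+3)/(r+1)^3) * (∑ i, (p i - q i) * Real.log (p i / q i)) ≤ (∑ i, (p i - q i) * Real.log ((p i + q i) / (2 * q i))) ∧ (∑ i, (p i - q i) * Real.log ((p i + q i) / (2 * q i))) ≤ (R^2*(R+3)/(R+1)^3) * (∑ i, (p i - q i) * Real.log (p i / q i)) := by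
  have hn : n ≠ 0 := by rintro rfl; simp at hp1
  haveI : Nonempty (Fin n) := Fin.pos_iff_nonempty.mp (Nat.pos_of_ne_zero hn)
  have hr1 : r ≤ 1 := by
    by_contra h
    push_neg at h
    have hlt : ∀ i ∈ Finset.univ, q i < p i := by
      intro i _
      have h1 := (hrR i).1
      have hqi := hq i
      rw [le_div_iff₀ hqi] at h1
      nlinarith
    have := Finset.sum_lt_sum_of_nonempty Finset.univ_nonempty hlt
    rw [hp1, hq1] at this
    exact lt_irrefl 1 this
  have hR1 : 1 ≤ R := by
    by_contra h
    push_neg at h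
    have hlt : ∀ i ∈ Finset.univ, p i < q i := by
      intro i _
      have h1 := (hrR i).2
      have hqi := hq i
      rw [div_le_iff₀ hqi] at h1
      nlinarith
    have := Finset.sum_lt_sum_of_nonempty Finset.univ_nonempty hlt
    rw [hp1, hq1] at this
    exact lt_irrefl 1 this
  have htermB : ∀ i : Fin n,
      (p i - q i) * Real.log (p i / q i) = q i * Bf (p i / q i) := by
    intro i
    have hqi := (hq i).ne'
    unfold Bf
    have h : q i * (p i / q i - 1) = p i - q i := by field_simp
    linear_combination (-Real.log (p i / q i)) * h
  have htermA : ∀ i : Fin n,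
      (p i - q i) * Real.log ((p i + q i) / (2 * q i)) = q i * Af (p i / q i) := by
    intro i
    have hqi := hq i
    have hpi := hp i
    unfold Af
    have h1 : (p i + q i) / (2 * q i) = (p i / q i + 1) / 2 := by
      field_simp
    have h2 : Real.log ((p i / q i + 1)/2) = Real.log (p i / q i + 1) - Real.log 2 :=
      Real.log_div (by positivity) (by norm_num)
    rw [h1, h2]
    have h : q i * (p i / q i - 1) = p i - q i := by field_simp
    linear_combination (-(Real.log (p i / q i + 1) - Real.log 2)) * h
  constructor
  · rw [Finset.mul_sum]
    apply Finset.sum_le_sum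
    intro i _
    rw [htermB i, htermA i]
    have hk := key_lower hr hr1 (hrR i).1
    have := mul_le_mul_of_nonneg_left hk (hq i).le
    nlinarith [this]
  · rw [Finset.mul_sum]
    apply Finset.sum_le_sum
    intro i _
    rw [htermB i, htermA i]
    have hti : 0 < p i / q i := div_pos (hp i) (hq i)
    have hk := key_upper hR1 hti (hrR i).2
    have := mul_le_mul_of_nonneg_left hk (hq i).le
    nlinarith [this]
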